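/- For any three s-t graphs A, B, C, the s-t graphs (A ⊘ B) ⊘ C and A ⊘ (B ⊘ C) coincide: there is a graph isomorphism between them which maps the distinguished vertex s to s and t to t and which is an isometry with respect to the shortest-path metrics induced by the edge lengths. -/

import Mathlib

open scoped ENNReal

/-- Cost of a chain (list of vertices): sum of the length function over consecutive pairs. -/
noncomputable def chainCost {α : Type} (len : α → α → ℝ≥0∞) : List α → ℝ≥0∞
  | a :: b :: l => len a b + chainCost len (b :: l)
  | _ => 0
  termination_by l => l.length

section basic
variable {α : Type} {len : α → α → ℝ≥0∞}

lemma chainCost_cons_cons (a b : α) (l : List α) :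
    chainCost len (a :: b :: l) = len a b + chainCost len (b :: l) := by
  simp [chainCost]

lemma chainCost_singleton (a : α) : chainCost len [a] = 0 := by simp [chainCost]

lemma chainCost_nil : chainCost len ([] : List α) = 0 := by simp [chainCost]

lemma chainCost_append (l1 l2 : List α) (v : α) (h1 : l1.getLast? = some v) :
    chainCost len (l1 ++ l2) = chainCost len l1 + chainCost len (v :: l2) := by
  induction l1 with
  | nil => simp at h1
  | cons x l ih =>
    cases l with
    | nil =>
      simp only [List.getLast?_singleton, Option.some.injEq] at h1
      subst h1
      simp [chainCost_singleton]
    | cons y l' =>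
      have h1' : (y :: l').getLast? = some v := by
        rwa [List.getLast?_cons_cons] at h1
      simp only [List.cons_append] at ih ⊢
      rw [chainCost_cons_cons, ih h1', chainCost_cons_cons, add_assoc]

lemma chainCost_map {β : Type} (len' : β → β → ℝ≥0∞) (φ : α → β)
    (hφ : ∀ a b, len' (φ a) (φ b) = len a b) :
    ∀ l : List α, chainCost len' (l.map φ) = chainCost len l := by
  intro l
  induction l with
  | nil => simp [chainCost_nil]
  | cons a l ih =>
    cases l with
    | nil => simp [chainCost_singleton]
    | cons b l' =>
      simp only [List.map_cons] at ih ⊢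
      rw [chainCost_cons_cons, chainCost_cons_cons, ih, hφ]

lemma chainCost_reverse (hsymm : ∀ a b, len a b = len b a) :
    ∀ l : List α, chainCost len l.reverse = chainCost len l := by
  intro l
  induction l with
  | nil => simp
  | cons a l ih =>
    cases l with
    | nil => simp
    | cons b l' =>
      rw [List.reverse_cons, chainCost_append _ _ b (by
        rw [List.getLast?_reverse]; simp), ih, chainCost_cons_cons,
        chainCost_cons_cons, chainCost_singleton, add_zero, hsymm a b, add_comm]

end basic

/-- A finite weighted multigraph with two distinguished vertices `s` and `t`.
Edge lengths take values in `ℝ≥0∞`. -/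
structure STGraph where
  V : Type
  E : Type
  finV : Fintype V
  finE : Fintype E
  ends : E → V × V
  elen : E → ℝ≥0∞
  s : V
  t : V

attribute [instance] STGraph.finV STGraph.finE

namespace STGraph

/-- The length between two vertices: the infimum of lengths of edges joining them
(`⊤` if there is no such edge). -/
noncomputable def lenFn (G : STGraph) (u v : G.V) : ℝ≥0∞ :=
  ⨅ e : {e : G.E // G.ends e = (u, v) ∨ G.ends e = (v, u)}, G.elen e.1

/-- The shortest-path (extended) distance between two vertices. -/
noncomputable def edist (G : STGraph) (u v : G.V) : ℝ≥0∞ :=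
  ⨅ l : {l : List G.V // l.head? = some u ∧ l.getLast? = some v}, chainCost G.lenFn l.1

/-- `len G` is the distance between the two distinguished vertices. -/
noncomputable def len (G : STGraph) : ℝ≥0∞ := G.edist G.s G.t

/-- An `s`-`t` graph is *proper* if all edge lengths are positive and finite, there are no
self-loops, the graph is connected, and `s ≠ t`. -/
def Proper (G : STGraph) : Prop :=
  (∀ e, 0 < G.elen e ∧ G.elen e < ⊤) ∧
  (∀ e, (G.ends e).1 ≠ (G.ends e).2) ∧
  (∀ u v, G.edist u v ≠ ⊤) ∧ G.s ≠ G.t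

/-- The inner (non-terminal) vertices of an `s`-`t` graph. -/
abbrev Inner (G : STGraph) : Type := {v : G.V // v ≠ G.s ∧ v ≠ G.t}

noncomputable instance (G : STGraph) : Fintype G.Inner := Fintype.ofFinite _

/-- Where a vertex `w` of `G` lands in `H ⊘ G` when the copy of `G` is glued along edge `e` of
`H`: `s(G)` and `t(G)` are identified with the endpoints of `e`. -/
noncomputable def endMap (H G : STGraph) (e : H.E) (w : G.V) : H.V ⊕ (H.E × G.Inner) := by
  classical
  exact if h : w = G.s then Sum.inl (H.ends e).1
    else if h' : w = G.t then Sum.inl (H.ends e).2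
    else Sum.inr (e, ⟨w, h, h'⟩)

/-- The composition `H ⊘ G`: every edge of `H` is replaced by a copy of `G`, with lengths in the
copy along `e` scaled by `len_H(e)/len(G)`. -/
noncomputable def oslash (H G : STGraph) : STGraph where
  V := H.V ⊕ (H.E × G.Inner)
  E := H.E × G.E
  finV := inferInstance
  finE := inferInstance
  ends := fun p => (endMap H G p.1 (G.ends p.2).1, endMap H G p.1 (G.ends p.2).2)
  elen := fun p => H.elen p.1 * G.elen p.2 / G.len
  s := Sum.inl H.s
  t := Sum.inl H.t

/-- A single edge of unit length. -/
noncomputable def unitEdge : STGraph where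
  V := Bool
  E := Unit
  finV := inferInstance
  finE := inferInstance
  ends := fun _ => (false, true)
  elen := fun _ => 1
  s := false
  t := true

/-- Recursive composition: `G^{⊘0}` is a single unit-length edge and
`G^{⊘k} = G^{⊘(k-1)} ⊘ G`. -/
noncomputable def iterOslash (G : STGraph) : ℕ → STGraph
  | 0 => unitEdge
  | k + 1 => oslash (iterOslash G k) G

end STGraph

-- assumes STGraph defs; written as continuation
namespace STGraph
variable {G : STGraph}

lemma lenFn_le_elen {u v : G.V} {e : G.E}
    (h : G.ends e = (u, v) ∨ G.ends e = (v, u)) : G.lenFn u v ≤ G.elen e :=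
  iInf_le_of_le ⟨e, h⟩ le_rfl

lemma lenFn_symm (u v : G.V) : G.lenFn u v = G.lenFn v u := by
  unfold lenFn
  apply le_antisymm <;>
    exact le_iInf fun ⟨e, he⟩ => iInf_le_of_le ⟨e, he.symm⟩ le_rfl

lemma edist_le_chainCost {u v : G.V} (l : List G.V)
    (h1 : l.head? = some u) (h2 : l.getLast? = some v) :
    G.edist u v ≤ chainCost G.lenFn l :=
  iInf_le_of_le ⟨l, h1, h2⟩ le_rfl

lemma edist_self (u : G.V) : G.edist u u = 0 :=
  le_antisymm (by simpa [chainCost_singleton] using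
    edist_le_chainCost (G := G) [u] rfl rfl) zero_le

lemma edist_le_lenFn (u v : G.V) : G.edist u v ≤ G.lenFn u v := by
  have := edist_le_chainCost (G := G) [u, v] rfl rfl
  simpa [chainCost_cons_cons, chainCost_singleton] using this

lemma edist_triangle (u v w : G.V) : G.edist u w ≤ G.edist u v + G.edist v w := by
  have hrw : G.edist u v + G.edist v w =
      ⨅ l1 : {l : List G.V // l.head? = some u ∧ l.getLast? = some v},
        ⨅ l2 : {l : List G.V // l.head? = some v ∧ l.getLast? = some w},
          chainCost G.lenFn l1.1 + chainCost G.lenFn l2.1 := by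
    rw [edist, edist, ENNReal.iInf_add]
    exact iInf_congr fun l1 => ENNReal.add_iInf
  rw [hrw]
  refine le_iInf fun ⟨l1, hl1, hl1'⟩ => ?_
  refine le_iInf fun ⟨l2, hl2, hl2'⟩ => ?_
  obtain ⟨l2', rfl⟩ : ∃ l2', l2 = v :: l2' := by
    cases l2 with
    | nil => simp at hl2
    | cons a t => exact ⟨t, by simpa using congrArg (fun o => o.elim (v :: t) (· :: t)) hl2⟩
  have hc : chainCost G.lenFn (l1 ++ l2') =
      chainCost G.lenFn l1 + chainCost G.lenFn (v :: l2') := chainCost_append l1 l2' v hl1'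
  refine le_trans (edist_le_chainCost (l1 ++ l2') ?_ ?_) (le_of_eq hc)
  · cases l1 with
    | nil => simp at hl1
    | cons a t => simpa using hl1
  · cases l2' with
    | nil =>
      simp only [List.getLast?_singleton, Option.some.injEq] at hl2'
      simpa [hl2'] using hl1'
    | cons b t =>
      rw [List.getLast?_append]
      have : (b :: t).getLast? = some w := by simpa using hl2'
      rw [this]; rfl

lemma edist_symm (u v : G.V) : G.edist u v = G.edist v u := by
  have key : ∀ a b : G.V, G.edist a b ≤ G.edist b a := by
    intro a b
    refine le_iInf fun ⟨l, hl, hl'⟩ => ?_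
    rw [← chainCost_reverse (fun x y => G.lenFn_symm x y) l]
    exact edist_le_chainCost l.reverse (by rw [List.head?_reverse]; exact hl')
      (by rw [List.getLast?_reverse]; exact hl)
  exact le_antisymm (key u v) (key v u)

lemma edist_le_edist_add_lenFn (u v w : G.V) :
    G.edist u w ≤ G.edist u v + G.lenFn v w :=
  le_trans (G.edist_triangle u v w) (add_le_add_right (G.edist_le_lenFn v w) _)

/-- Lipschitz lower-bound principle. -/
lemma le_add_chainCost (F : G.V → ℝ≥0∞)
    (hF : ∀ u v, F v ≤ F u + G.lenFn u v) :
    ∀ (l : List G.V) (u v : G.V), l.head? = some u → l.getLast? = some v →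
      F v ≤ F u + chainCost G.lenFn l := by
  intro l
  induction l with
  | nil => intro u v h; simp at h
  | cons a t ih =>
    intro u v h1 h2
    obtain rfl : u = a := by simpa using h1.symm
    cases t with
    | nil =>
      obtain rfl : u = v := by simpa using h2
      exact le_add_right le_rfl
    | cons b t' =>
      have h2' : (b :: t').getLast? = some v := by rwa [List.getLast?_cons_cons] at h2
      calc F v ≤ F b + chainCost G.lenFn (b :: t') := ih b v rfl h2'
        _ ≤ (F u + G.lenFn u b) + chainCost G.lenFn (b :: t') :=
            add_le_add_left (hF u b) _
        _ = F u + chainCost G.lenFn (u :: b :: t') := by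
            rw [chainCost_cons_cons, add_assoc]

lemma le_add_edist (F : G.V → ℝ≥0∞)
    (hF : ∀ u v, F v ≤ F u + G.lenFn u v) (u v : G.V) :
    F v ≤ F u + G.edist u v := by
  rw [edist, ENNReal.add_iInf]
  exact le_iInf fun ⟨l, hl, hl'⟩ => le_add_chainCost F hF l u v hl hl'

/-- Edge-version Lipschitz hypothesis implies the `lenFn` version. -/
lemma lipschitz_of_edges (F : G.V → ℝ≥0∞)
    (hF : ∀ e u v, G.ends e = (u, v) ∨ G.ends e = (v, u) → F v ≤ F u + G.elen e) :
    ∀ u v, F v ≤ F u + G.lenFn u v := by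
  intro u v
  rw [lenFn, ENNReal.add_iInf]
  exact le_iInf fun ⟨e, he⟩ => hF e u v he

end STGraph

namespace STGraph
variable {G : STGraph}

lemma lenFn_self_top (hG : G.Proper) (u : G.V) : G.lenFn u u = ⊤ := by
  rw [lenFn]
  haveI : IsEmpty {e : G.E // G.ends e = (u, u) ∨ G.ends e = (u, u)} :=
    ⟨fun ⟨e, he⟩ => hG.2.1 e (by rcases he with he | he <;> rw [he])⟩
  exact iInf_of_empty _

lemma len_ne_top (hG : G.Proper) : G.len ≠ ⊤ := hG.2.2.1 _ _

lemma iInf_elen_le_chainCost (hG : G.Proper) (l : List G.V) (u v : G.V)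
    (h1 : l.head? = some u) (h2 : l.getLast? = some v) (huv : u ≠ v) :
    (⨅ e : G.E, G.elen e) ≤ chainCost G.lenFn l := by
  cases l with
  | nil => simp at h1
  | cons a t =>
    obtain rfl : u = a := by simpa using h1.symm
    cases t with
    | nil => exact absurd (by simpa using h2) huv
    | cons b t' =>
      rw [chainCost_cons_cons]
      by_cases hub : u = b
      · subst hub
        rw [lenFn_self_top hG, top_add]
        exact le_top
      · exact le_trans (le_iInf fun ⟨e, _⟩ => iInf_le _ e) le_self_add

lemma len_pos (hG : G.Proper) : 0 < G.len := by
  have hε : 0 < ⨅ e : G.E, G.elen e := by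
    rcases isEmpty_or_nonempty G.E with h | h
    · rw [iInf_of_empty]; exact ENNReal.zero_lt_top
    · obtain ⟨e0, he0⟩ := Finite.exists_min G.elen
      exact lt_of_lt_of_le (hG.1 e0).1 (le_iInf he0)
  exact lt_of_lt_of_le hε
    (le_iInf fun ⟨l, h1, h2⟩ => iInf_elen_le_chainCost hG l G.s G.t h1 h2 hG.2.2.2)

lemma lenFn_congr {G G' : STGraph} (φ : G.V ≃ G'.V) (ψ : G.E ≃ G'.E)
    (hends : ∀ e, G'.ends (ψ e) = (φ (G.ends e).1, φ (G.ends e).2) ∨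
      G'.ends (ψ e) = (φ (G.ends e).2, φ (G.ends e).1))
    (hlen : ∀ e, G'.elen (ψ e) = G.elen e) (u v : G.V) :
    G'.lenFn (φ u) (φ v) = G.lenFn u v := by
  apply le_antisymm
  · refine le_iInf fun ⟨e, he⟩ => ?_
    refine iInf_le_of_le ⟨ψ e, ?_⟩ (le_of_eq (hlen e))
    rcases he with he | he <;> rcases hends e with h | h <;> rw [he] at h <;>
      simp only [] at h <;> first | exact Or.inl h | exact Or.inr h
  · refine le_iInf fun ⟨e', he'⟩ => ?_
    refine iInf_le_of_le ⟨ψ.symm e', ?_⟩ (le_of_eq ?_)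
    · have h := hends (ψ.symm e')
      rw [Equiv.apply_symm_apply] at h
      rcases h with h | h <;> rcases he' with h' | h' <;> rw [h'] at h <;>
        rw [Prod.mk.injEq] at h
      · exact Or.inl (Prod.ext (φ.injective h.1).symm (φ.injective h.2).symm)
      · exact Or.inr (Prod.ext (φ.injective h.1).symm (φ.injective h.2).symm)
      · exact Or.inr (Prod.ext (φ.injective h.2).symm (φ.injective h.1).symm)
      · exact Or.inl (Prod.ext (φ.injective h.2).symm (φ.injective h.1).symm)
    · rw [← hlen (ψ.symm e'), Equiv.apply_symm_apply]

lemma edist_congr {G G' : STGraph} (φ : G.V ≃ G'.V) (ψ : G.E ≃ G'.E)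
    (hends : ∀ e, G'.ends (ψ e) = (φ (G.ends e).1, φ (G.ends e).2) ∨
      G'.ends (ψ e) = (φ (G.ends e).2, φ (G.ends e).1))
    (hlen : ∀ e, G'.elen (ψ e) = G.elen e) (u v : G.V) :
    G'.edist (φ u) (φ v) = G.edist u v := by
  have hφ : ∀ a b, G'.lenFn (φ a) (φ b) = G.lenFn a b := lenFn_congr φ ψ hends hlen
  have hφ' : ∀ a b : G'.V, G.lenFn (φ.symm a) (φ.symm b) = G'.lenFn a b := by
    intro a b
    have := hφ (φ.symm a) (φ.symm b)
    rw [Equiv.apply_symm_apply, Equiv.apply_symm_apply] at this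
    exact this.symm
  apply le_antisymm
  · refine le_iInf fun ⟨l, h1, h2⟩ => ?_
    rw [← chainCost_map G'.lenFn φ hφ l]
    exact edist_le_chainCost _ (by rw [List.head?_map, h1]; rfl)
      (by rw [List.getLast?_map, h2]; rfl)
  · refine le_iInf fun ⟨l, h1, h2⟩ => ?_
    rw [← chainCost_map G.lenFn φ.symm hφ' l]
    exact edist_le_chainCost _
      (by rw [List.head?_map, h1]; simp)
      (by rw [List.getLast?_map, h2]; simp)

end STGraph

namespace STGraph

lemma endMap_s (H G : STGraph) (e : H.E) :
    endMap H G e G.s = Sum.inl (H.ends e).1 := by simp [endMap]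

lemma endMap_t (H G : STGraph) (e : H.E) (h : G.s ≠ G.t) :
    endMap H G e G.t = Sum.inl (H.ends e).2 := by
  simp [endMap, h.symm]

lemma endMap_inner (H G : STGraph) (e : H.E) (w : G.V) (h1 : w ≠ G.s) (h2 : w ≠ G.t) :
    endMap H G e w = Sum.inr (e, ⟨w, h1, h2⟩) := by simp [endMap, h1, h2]

lemma oslash_ends (H G : STGraph) (p : H.E × G.E) :
    (oslash H G).ends p = (endMap H G p.1 (G.ends p.2).1, endMap H G p.1 (G.ends p.2).2) := rfl

lemma oslash_elen (H G : STGraph) (p : H.E × G.E) :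
    (oslash H G).elen p = H.elen p.1 / G.len * G.elen p.2 := by
  show H.elen p.1 * G.elen p.2 / G.len = _
  rw [div_eq_mul_inv, div_eq_mul_inv, mul_right_comm]

section oslash_len
variable (H G : STGraph) (hH : H.Proper) (hG : G.Proper)
include hH hG

/-- The image of the copy of `G` along `f` connects the two endpoints of `f` at cost
at most `elen f`. -/
lemma oslash_edist_ends_le (f : H.E) :
    (oslash H G).edist (Sum.inl (H.ends f).1) (Sum.inl (H.ends f).2) ≤ H.elen f := by
  set c : ℝ≥0∞ := H.elen f / G.len with hc
  have hc0 : c ≠ 0 := (ENNReal.div_pos (hH.1 f).1.ne' (len_ne_top hG)).ne'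
  have hctop : c ≠ ⊤ := (ENNReal.div_lt_top (hH.1 f).2.ne (len_pos hG).ne').ne
  have hpt : ∀ w w' : G.V,
      (oslash H G).lenFn (endMap H G f w) (endMap H G f w') ≤ c * G.lenFn w w' := by
    intro w w'
    rcases isEmpty_or_nonempty {g : G.E // G.ends g = (w, w') ∨ G.ends g = (w', w)} with h | h
    · have h2 : G.lenFn w w' = ⊤ := by rw [lenFn]; exact iInf_of_empty _
      rw [h2, ENNReal.mul_top hc0]
      exact le_top
    · have h2 : c * G.lenFn w w' =
          ⨅ g : {g : G.E // G.ends g = (w, w') ∨ G.ends g = (w', w)}, c * G.elen g.1 := by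
        rw [lenFn, ENNReal.mul_iInf_of_ne hc0 hctop]
      rw [h2]
      refine le_iInf fun ⟨g, hg⟩ => ?_
      refine le_trans (lenFn_le_elen (e := (f, g)) ?_)
        (le_of_eq (by rw [oslash_elen]))
      rw [oslash_ends]
      rcases hg with hg | hg <;> rw [hg] <;> [exact Or.inl rfl; exact Or.inr rfl]
  have hchain : ∀ l : List G.V,
      chainCost (oslash H G).lenFn (l.map (endMap H G f)) ≤ c * chainCost G.lenFn l := by
    intro l
    induction l with
    | nil => exact (le_of_eq chainCost_nil).trans zero_le
    | cons a t ih =>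
      cases t with
      | nil => exact (le_of_eq (chainCost_singleton _)).trans zero_le
      | cons b t' =>
        calc chainCost (oslash H G).lenFn ((a :: b :: t').map (endMap H G f))
            = (oslash H G).lenFn (endMap H G f a) (endMap H G f b) +
                chainCost (oslash H G).lenFn ((b :: t').map (endMap H G f)) :=
              chainCost_cons_cons _ _ _
          _ ≤ c * G.lenFn a b + c * chainCost G.lenFn (b :: t') := add_le_add (hpt a b) ih
          _ = c * chainCost G.lenFn (a :: b :: t') := by rw [chainCost_cons_cons, mul_add]
  haveI : Nonempty {l : List G.V // l.head? = some G.s ∧ l.getLast? = some G.t} :=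
    ⟨⟨[G.s, G.t], by simp, by simp⟩⟩
  have key : (oslash H G).edist (Sum.inl (H.ends f).1) (Sum.inl (H.ends f).2) ≤ c * G.len := by
    have h3 : c * G.len =
        ⨅ l : {l : List G.V // l.head? = some G.s ∧ l.getLast? = some G.t},
          c * chainCost G.lenFn l.1 := by
      rw [len, edist, ENNReal.mul_iInf_of_ne hc0 hctop]
    rw [h3]
    refine le_iInf fun ⟨l, h1, h2⟩ => ?_
    refine le_trans (edist_le_chainCost (l.map (endMap H G f)) ?_ ?_) (hchain l)
    · have hm : (l.map (endMap H G f)).head? = (l.head?).map (endMap H G f) := List.head?_map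
      rw [h1, Option.map_some, endMap_s] at hm
      exact hm
    · have hm : (l.map (endMap H G f)).getLast? = (l.getLast?).map (endMap H G f) :=
        List.getLast?_map
      rw [h2, Option.map_some, endMap_t H G f hG.2.2.2] at hm
      exact hm
  calc (oslash H G).edist (Sum.inl (H.ends f).1) (Sum.inl (H.ends f).2)
      ≤ c * G.len := key
    _ = H.elen f := ENNReal.div_mul_cancel (len_pos hG).ne' (len_ne_top hG)

lemma len_oslash_le : (oslash H G).len ≤ H.len := by
  set F : H.V → ℝ≥0∞ := fun b => (oslash H G).edist (Sum.inl H.s) (Sum.inl b) with hF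
  have hlip : ∀ u v, F v ≤ F u + H.lenFn u v := by
    refine lipschitz_of_edges F fun e u v he => ?_
    have h2 : (oslash H G).edist (Sum.inl u) (Sum.inl v) ≤ H.elen e := by
      rcases he with he | he
      · have := oslash_edist_ends_le H G hH hG e; rw [he] at this; exact this
      · have := oslash_edist_ends_le H G hH hG e; rw [he] at this
        exact (edist_symm (G := oslash H G) _ _).trans_le this
    exact le_trans ((oslash H G).edist_triangle (Sum.inl H.s) (Sum.inl u) (Sum.inl v)) (add_le_add_right h2 _)
  have := le_add_edist F hlip H.s H.t
  simp only [hF] at this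
  rw [edist_self (G := oslash H G) (Sum.inl H.s : (oslash H G).V), zero_add] at this
  exact this

/-- The potential function for the lower bound. -/
noncomputable def lowerF : (oslash H G).V → ℝ≥0∞ :=
  Sum.elim (fun b => H.edist H.s b)
    (fun p => min (H.edist H.s (H.ends p.1).1 + H.elen p.1 / G.len * G.edist G.s p.2.1)
      (H.edist H.s (H.ends p.1).2 + H.elen p.1 / G.len * G.edist G.t p.2.1))

lemma le_len_oslash : H.len ≤ (oslash H G).len := by
  set c : H.E → ℝ≥0∞ := fun f => H.elen f / G.len with hcdef
  have hcL : ∀ f, c f * G.len = H.elen f :=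
    fun f => ENNReal.div_mul_cancel (len_pos hG).ne' (len_ne_top hG)
  -- key edge inequality
  have key : ∀ (f : H.E) (g : G.E) (w w' : G.V),
      G.ends g = (w, w') ∨ G.ends g = (w', w) →
      lowerF H G (endMap H G f w') ≤ lowerF H G (endMap H G f w) + c f * G.elen g := by
    intro f g w w' hg
    have hww' : G.lenFn w w' ≤ G.elen g := lenFn_le_elen hg
    have hw'w : G.lenFn w' w ≤ G.elen g := by rw [lenFn_symm]; exact hww'
    set u1 := (H.ends f).1
    set u2 := (H.ends f).2
    set d1 := H.edist H.s u1 with hd1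
    set d2 := H.edist H.s u2 with hd2
    have hu21 : d2 ≤ d1 + H.elen f :=
      le_trans (edist_le_edist_add_lenFn H.s u1 u2)
        (add_le_add_right (lenFn_le_elen (Or.inl rfl)) _)
    have hu12 : d1 ≤ d2 + H.elen f :=
      le_trans (edist_le_edist_add_lenFn H.s u2 u1)
        (add_le_add_right (lenFn_le_elen (Or.inr rfl)) _)
    by_cases hs' : w' = G.s
    · subst hs'
      rw [endMap_s]
      by_cases hs : w = G.s
      · subst hs; rw [endMap_s]; exact le_self_add
      by_cases ht : w = G.t
      · subst ht
        rw [endMap_t H G f hG.2.2.2]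
        -- d1 ≤ d2 + c f * elen g since G.len ≤ elen g
        have hL : G.len ≤ G.elen g := by
          rw [len, edist_symm]
          exact le_trans (edist_le_lenFn _ _) hww'
        calc (lowerF H G (Sum.inl u1) : ℝ≥0∞) = d1 := rfl
          _ ≤ d2 + H.elen f := hu12
          _ = d2 + c f * G.len := by rw [hcL]
          _ ≤ d2 + c f * G.elen g := add_le_add_right (mul_le_mul_right hL _) _
      · rw [endMap_inner H G f w hs ht]
        show d1 ≤ min (d1 + c f * G.edist G.s w) (d2 + c f * G.edist G.t w) + c f * G.elen g
        have h1 : d1 ≤ (d1 + c f * G.edist G.s w) + c f * G.elen g :=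
          le_trans le_self_add le_self_add
        have h2 : d1 ≤ (d2 + c f * G.edist G.t w) + c f * G.elen g := by
          have hws : G.edist w G.s ≤ G.elen g := le_trans (edist_le_lenFn _ _) hww'
          have hL : G.len ≤ G.edist G.t w + G.elen g := by
            rw [len, edist_symm]
            exact le_trans (edist_triangle G.t w G.s) (add_le_add_right hws _)
          calc d1 ≤ d2 + H.elen f := hu12
            _ = d2 + c f * G.len := by rw [hcL]
            _ ≤ d2 + c f * (G.edist G.t w + G.elen g) :=
                add_le_add_right (mul_le_mul_right hL _) _
            _ = (d2 + c f * G.edist G.t w) + c f * G.elen g := by rw [mul_add, add_assoc]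
        rcases min_cases (d1 + c f * G.edist G.s w) (d2 + c f * G.edist G.t w) with
          ⟨hm, _⟩ | ⟨hm, _⟩ <;> rw [hm]
        · exact h1
        · exact h2
    · by_cases ht' : w' = G.t
      · subst ht'
        rw [endMap_t H G f hG.2.2.2]
        by_cases hs : w = G.s
        · subst hs
          rw [endMap_s]
          have hL : G.len ≤ G.elen g := by
            rw [len]
            exact le_trans (edist_le_lenFn _ _) hww'
          calc (lowerF H G (Sum.inl u2) : ℝ≥0∞) = d2 := rfl
            _ ≤ d1 + H.elen f := hu21
            _ = d1 + c f * G.len := by rw [hcL]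
            _ ≤ d1 + c f * G.elen g := add_le_add_right (mul_le_mul_right hL _) _
        by_cases ht : w = G.t
        · subst ht; rw [endMap_t H G f hG.2.2.2]; exact le_self_add
        · rw [endMap_inner H G f w hs ht]
          show d2 ≤ min (d1 + c f * G.edist G.s w) (d2 + c f * G.edist G.t w) + c f * G.elen g
          have h1 : d2 ≤ (d1 + c f * G.edist G.s w) + c f * G.elen g := by
            have hwt : G.edist w G.t ≤ G.elen g := le_trans (edist_le_lenFn _ _) hww'
            have hL : G.len ≤ G.edist G.s w + G.elen g := by
              rw [len]
              exact le_trans (edist_triangle G.s w G.t) (add_le_add_right hwt _)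
            calc d2 ≤ d1 + H.elen f := hu21
              _ = d1 + c f * G.len := by rw [hcL]
              _ ≤ d1 + c f * (G.edist G.s w + G.elen g) :=
                  add_le_add_right (mul_le_mul_right hL _) _
              _ = (d1 + c f * G.edist G.s w) + c f * G.elen g := by rw [mul_add, add_assoc]
          have h2 : d2 ≤ (d2 + c f * G.edist G.t w) + c f * G.elen g :=
            le_trans le_self_add le_self_add
          rcases min_cases (d1 + c f * G.edist G.s w) (d2 + c f * G.edist G.t w) with
            ⟨hm, _⟩ | ⟨hm, _⟩ <;> rw [hm]
          · exact h1
          · exact h2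
      · -- w' inner
        rw [endMap_inner H G f w' hs' ht']
        show min (d1 + c f * G.edist G.s w') (d2 + c f * G.edist G.t w') ≤ _
        by_cases hs : w = G.s
        · subst hs
          rw [endMap_s]
          have hsw' : G.edist G.s w' ≤ G.elen g := le_trans (edist_le_lenFn _ _) hww'
          calc min (d1 + c f * G.edist G.s w') (d2 + c f * G.edist G.t w')
              ≤ d1 + c f * G.edist G.s w' := min_le_left _ _
            _ ≤ d1 + c f * G.elen g := add_le_add_right (mul_le_mul_right hsw' _) _
        by_cases ht : w = G.t
        · subst ht
          rw [endMap_t H G f hG.2.2.2]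
          have htw' : G.edist G.t w' ≤ G.elen g := le_trans (edist_le_lenFn _ _) hww'
          calc min (d1 + c f * G.edist G.s w') (d2 + c f * G.edist G.t w')
              ≤ d2 + c f * G.edist G.t w' := min_le_right _ _
            _ ≤ d2 + c f * G.elen g := add_le_add_right (mul_le_mul_right htw' _) _
        · rw [endMap_inner H G f w hs ht]
          show _ ≤ min (d1 + c f * G.edist G.s w) (d2 + c f * G.edist G.t w) + c f * G.elen g
          have hSw : G.edist G.s w' ≤ G.edist G.s w + G.elen g :=
            le_trans (edist_le_edist_add_lenFn G.s w w') (add_le_add_right hww' _)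
          have hTw : G.edist G.t w' ≤ G.edist G.t w + G.elen g :=
            le_trans (edist_le_edist_add_lenFn G.t w w') (add_le_add_right hww' _)
          rcases min_cases (d1 + c f * G.edist G.s w) (d2 + c f * G.edist G.t w) with
            ⟨hm, _⟩ | ⟨hm, _⟩ <;> rw [hm]
          · calc min (d1 + c f * G.edist G.s w') (d2 + c f * G.edist G.t w')
                ≤ d1 + c f * G.edist G.s w' := min_le_left _ _
              _ ≤ d1 + c f * (G.edist G.s w + G.elen g) :=
                  add_le_add_right (mul_le_mul_right hSw _) _
              _ = (d1 + c f * G.edist G.s w) + c f * G.elen g := by rw [mul_add, add_assoc]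
          · calc min (d1 + c f * G.edist G.s w') (d2 + c f * G.edist G.t w')
                ≤ d2 + c f * G.edist G.t w' := min_le_right _ _
              _ ≤ d2 + c f * (G.edist G.t w + G.elen g) :=
                  add_le_add_right (mul_le_mul_right hTw _) _
              _ = (d2 + c f * G.edist G.t w) + c f * G.elen g := by rw [mul_add, add_assoc]
  have hlip : ∀ u v, lowerF H G v ≤ lowerF H G u + (oslash H G).lenFn u v := by
    refine lipschitz_of_edges _ fun e u v he => ?_
    obtain ⟨f, g⟩ := e
    rw [oslash_ends] at he
    have helen : (oslash H G).elen (f, g) = c f * G.elen g := oslash_elen H G (f, g)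
    rcases he with he | he <;> obtain ⟨h1, h2⟩ := Prod.mk.inj he
    · rw [← h1, ← h2, helen]
      exact key f g (G.ends g).1 (G.ends g).2 (Or.inl rfl)
    · rw [← h1, ← h2, helen]
      exact key f g (G.ends g).2 (G.ends g).1 (Or.inr rfl)
  have := le_add_edist (lowerF H G) hlip (oslash H G).s (oslash H G).t
  have hFs : lowerF H G (oslash H G).s = 0 := edist_self H.s
  have hFt : lowerF H G (oslash H G).t = H.len := rfl
  rw [hFs, hFt, zero_add] at this
  exact this

lemma len_oslash : (oslash H G).len = H.len :=
  le_antisymm (len_oslash_le H G hH hG) (le_len_oslash H G hH hG)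

end oslash_len
end STGraph

namespace STGraph

/-- The associativity vertex map. -/
noncomputable def assocV (A B C : STGraph) :
    (oslash (oslash A B) C).V → (oslash A (oslash B C)).V
  | Sum.inl (Sum.inl a) => Sum.inl a
  | Sum.inl (Sum.inr (e, b)) =>
      Sum.inr (e, ⟨Sum.inl b.1,
        fun h => b.2.1 (Sum.inl.inj h), fun h => b.2.2 (Sum.inl.inj h)⟩)
  | Sum.inr ((e, f), c) =>
      Sum.inr (e, ⟨Sum.inr (f, c), fun h => Sum.inr_ne_inl h, fun h => Sum.inr_ne_inl h⟩)

/-- The inverse associativity vertex map. -/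
noncomputable def assocVInv (A B C : STGraph) :
    (oslash A (oslash B C)).V → (oslash (oslash A B) C).V
  | Sum.inl a => Sum.inl (Sum.inl a)
  | Sum.inr (e, ⟨Sum.inl b, hb⟩) =>
      Sum.inl (Sum.inr (e, ⟨b, fun h => hb.1 (congrArg Sum.inl h),
        fun h => hb.2 (congrArg Sum.inl h)⟩))
  | Sum.inr (e, ⟨Sum.inr (f, c), _⟩) => Sum.inr ((e, f), c)

lemma assocV_leftInv (A B C : STGraph) :
    Function.LeftInverse (assocVInv A B C) (assocV A B C) := by
  rintro (((a | ⟨e, b⟩)) | ⟨⟨e, f⟩, c⟩) <;> rfl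

lemma assocV_rightInv (A B C : STGraph) :
    Function.RightInverse (assocVInv A B C) (assocV A B C) := by
  rintro (a | ⟨e, ⟨(b | ⟨f, c⟩), hb⟩⟩) <;> rfl

/-- `assocV` intertwines the gluing maps. -/
lemma assocV_endMap (A B C : STGraph) (hB : B.Proper) (hC : C.Proper)
    (f : A.E) (g : B.E) (w : C.V) :
    assocV A B C (endMap (oslash A B) C (f, g) w)
      = endMap A (oslash B C) f (endMap B C g w) := by
  have hinl : ∀ b : B.V,
      assocV A B C (Sum.inl (endMap A B f b)) = endMap A (oslash B C) f (Sum.inl b) := by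
    intro b
    by_cases h1 : b = B.s
    · subst h1
      rw [endMap_s]
      have : (Sum.inl B.s : (oslash B C).V) = (oslash B C).s := rfl
      rw [this, endMap_s]
      rfl
    by_cases h2 : b = B.t
    · subst h2
      rw [endMap_t A B f hB.2.2.2]
      have : (Sum.inl B.t : (oslash B C).V) = (oslash B C).t := rfl
      rw [this, endMap_t A (oslash B C) f ?hst]
      case hst => exact fun h => hB.2.2.2 (Sum.inl.inj h)
      rfl
    · rw [endMap_inner A B f b h1 h2,
        endMap_inner A (oslash B C) f (Sum.inl b)
          (fun h => h1 (Sum.inl.inj h)) (fun h => h2 (Sum.inl.inj h))]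
      rfl
  by_cases hs : w = C.s
  · subst hs
    rw [endMap_s (oslash A B) C (f, g), endMap_s B C g]
    exact hinl (B.ends g).1
  by_cases ht : w = C.t
  · subst ht
    rw [endMap_t (oslash A B) C (f, g) hC.2.2.2, endMap_t B C g hC.2.2.2]
    exact hinl (B.ends g).2
  · rw [endMap_inner (oslash A B) C (f, g) w hs ht, endMap_inner B C g w hs ht,
      endMap_inner A (oslash B C) f (Sum.inr (g, ⟨w, hs, ht⟩))
        (fun h => Sum.inr_ne_inl h) (fun h => Sum.inr_ne_inl h)]
    rfl

end STGraph

open STGraph in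
/-- Associativity of `⊘`: for any three (proper) `s`-`t` graphs `A`, `B`, `C`, the graphs
`(A ⊘ B) ⊘ C` and `A ⊘ (B ⊘ C)` coincide: there is a graph isomorphism (a pair of
bijections on vertices and edges, compatible with endpoints and preserving edge lengths)
which maps `s` to `s` and `t` to `t` and which is an isometry for the shortest-path
metrics. -/
theorem oslash_assoc (A B C : STGraph) (hA : A.Proper) (hB : B.Proper) (hC : C.Proper) :
    ∃ (φ : (oslash (oslash A B) C).V ≃ (oslash A (oslash B C)).V)
      (ψ : (oslash (oslash A B) C).E ≃ (oslash A (oslash B C)).E),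
      φ (oslash (oslash A B) C).s = (oslash A (oslash B C)).s ∧
      φ (oslash (oslash A B) C).t = (oslash A (oslash B C)).t ∧
      (∀ e : (oslash (oslash A B) C).E,
        ((oslash A (oslash B C)).ends (ψ e) =
            (φ ((oslash (oslash A B) C).ends e).1, φ ((oslash (oslash A B) C).ends e).2) ∨
          (oslash A (oslash B C)).ends (ψ e) =
            (φ ((oslash (oslash A B) C).ends e).2, φ ((oslash (oslash A B) C).ends e).1))) ∧
      (∀ e : (oslash (oslash A B) C).E,
        (oslash A (oslash B C)).elen (ψ e) = (oslash (oslash A B) C).elen e) ∧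
      (∀ u v : (oslash (oslash A B) C).V,
        (oslash A (oslash B C)).edist (φ u) (φ v) = (oslash (oslash A B) C).edist u v) := by
  classical
  have hlenBC : (oslash B C).len = B.len := len_oslash B C hB hC
  set φ : (oslash (oslash A B) C).V ≃ (oslash A (oslash B C)).V :=
    ⟨assocV A B C, assocVInv A B C, assocV_leftInv A B C, assocV_rightInv A B C⟩ with hφ
  set ψ : (oslash (oslash A B) C).E ≃ (oslash A (oslash B C)).E :=
    (Equiv.prodAssoc A.E B.E C.E) with hψ
  have hends : ∀ e : (oslash (oslash A B) C).E,
      (oslash A (oslash B C)).ends (ψ e) =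
        (φ ((oslash (oslash A B) C).ends e).1, φ ((oslash (oslash A B) C).ends e).2) ∨
      (oslash A (oslash B C)).ends (ψ e) =
        (φ ((oslash (oslash A B) C).ends e).2, φ ((oslash (oslash A B) C).ends e).1) := by
    rintro ⟨⟨f, g⟩, h⟩
    left
    exact Prod.ext (assocV_endMap A B C hB hC f g (C.ends h).1).symm
      (assocV_endMap A B C hB hC f g (C.ends h).2).symm
  have hlen : ∀ e : (oslash (oslash A B) C).E,
      (oslash A (oslash B C)).elen (ψ e) = (oslash (oslash A B) C).elen e := by
    rintro ⟨⟨f, g⟩, h⟩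
    show A.elen f * (B.elen g * C.elen h / C.len) / (oslash B C).len
      = A.elen f * B.elen g / B.len * C.elen h / C.len
    rw [hlenBC]
    simp only [div_eq_mul_inv]
    ring
  exact ⟨φ, ψ, rfl, rfl, hends, hlen, edist_congr φ ψ hends hlen⟩
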